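/- Let ξ₀(s) = ∫₀¹ ((1−x)/(1+x))·s·x^{s−1} dx for s > 0. Then for every s > 0, (1 − ξ₀(s))·ξ₀(s) + s·ξ₀′(s) < 0. Consequently, the function ξ₃(s) := (1 − ξ₀(s))/(2s·ξ₀(s)) is strictly increasing on (0,∞). -/

import Mathlib

open MeasureTheory Real Set

noncomputable def ξ₀ (s : ℝ) : ℝ :=
  ∫ x in (0:ℝ)..1, ((1 - x) / (1 + x)) * (s * x ^ (s - 1))

noncomputable def ξ₀' (s : ℝ) : ℝ :=
  ∫ x in (0:ℝ)..1, 2 * x ^ s * Real.log x / (1 + x) ^ 2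

noncomputable def ξ₃ (s : ℝ) : ℝ := (1 - ξ₀ s) / (2 * s * ξ₀ s)

namespace Xi3Aux

noncomputable def A (s : ℝ) : ℝ := ∫ x in (0:ℝ)..1, x ^ s / (1 + x)
noncomputable def A' (s : ℝ) : ℝ := ∫ x in (0:ℝ)..1, x ^ s * Real.log x / (1 + x)
noncomputable def B (s : ℝ) : ℝ := ∫ x in (0:ℝ)..1, 2 * x ^ s / (1 + x) ^ 2


/-- key log bound -/
lemma rpow_mul_neg_log_le {a x : ℝ} (ha : 0 < a) (hx : 0 < x) (hx1 : x ≤ 1) :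
    x ^ a * (-Real.log x) ≤ 1 / a := by
  have hy : 0 < x ^ a := Real.rpow_pos_of_pos hx a
  have hlog : Real.log (x ^ a) = a * Real.log x := Real.log_rpow hx a
  have h2 : Real.log ((x ^ a)⁻¹) ≤ (x ^ a)⁻¹ - 1 := Real.log_le_sub_one_of_pos (by positivity)
  rw [Real.log_inv, hlog] at h2
  have h3 : x ^ a * (-(a * Real.log x)) ≤ x ^ a * ((x ^ a)⁻¹ - 1) := by
    apply mul_le_mul_of_nonneg_left h2 hy.le
  have h4 : x ^ a * ((x ^ a)⁻¹ - 1) ≤ 1 := by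
    have : x ^ a * (x ^ a)⁻¹ = 1 := mul_inv_cancel₀ hy.ne'
    nlinarith
  have h5 : x ^ a * (-(a * Real.log x)) = a * (x ^ a * (-Real.log x)) := by ring
  rw [h5] at h3
  have := h3.trans h4
  rw [le_div_iff₀ ha]
  linarith [this]

lemma contOn_pow_div {s c : ℝ} (hs : 0 < s) (n : ℕ) :
    ContinuousOn (fun x : ℝ => c * x ^ s / (1 + x) ^ n) (Icc 0 1) := by
  apply ContinuousOn.div
  · exact (continuous_const.mul (Real.continuous_rpow_const hs.le)).continuousOn
  · exact ((continuous_const.add continuous_id).pow n).continuousOn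
  · intro x hx
    have : (0:ℝ) < 1 + x := by have := hx.1; simp at this ⊢; linarith
    positivity

lemma II_A {s : ℝ} (hs : 0 < s) :
    IntervalIntegrable (fun x : ℝ => x ^ s / (1 + x)) volume 0 1 := by
  have h := (contOn_pow_div (c := 1) hs 1)
  simp only [one_mul, pow_one] at h
  exact (h.mono (by rw [uIcc_of_le (zero_le_one : (0:ℝ) ≤ 1)])).intervalIntegrable

lemma II_B {s : ℝ} (hs : 0 < s) :
    IntervalIntegrable (fun x : ℝ => 2 * x ^ s / (1 + x) ^ 2) volume 0 1 := by
  exact ((contOn_pow_div hs 2).mono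
    (by rw [uIcc_of_le (zero_le_one : (0:ℝ) ≤ 1)])).intervalIntegrable

lemma meas_aux {s : ℝ} (hs : 0 ≤ s) (c : ℝ) (n : ℕ) (m : Measure ℝ) :
    AEStronglyMeasurable (fun x : ℝ => c * x ^ s * Real.log x / (1 + x) ^ n) m := by
  apply Measurable.aestronglyMeasurable
  exact (((measurable_const.mul (Real.continuous_rpow_const hs).measurable).mul
    Real.measurable_log).div ((measurable_const.add measurable_id).pow_const n))

/-- bound: on Ioc 0 1, |c * x^t * log x / (1+x)^n| ≤ |c| * (2/s) * x^(s/2) for t ≥ s. -/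
lemma log_integrand_bound {s t c x : ℝ} (hs : 0 < s) (hts : s ≤ t) (hx : 0 < x) (hx1 : x ≤ 1)
    (n : ℕ) : |c * x ^ t * Real.log x / (1 + x) ^ n| ≤ |c| * (2 / s) * x ^ (s / 2) := by
  have h1x : (1:ℝ) ≤ (1 + x) ^ n := one_le_pow₀ (by linarith)
  have hxt : x ^ t ≤ x ^ (s / 2 + s / 2) := by
    apply Real.rpow_le_rpow_of_exponent_ge hx hx1; linarith
  have hsplit : x ^ (s / 2 + s / 2) = x ^ (s / 2) * x ^ (s / 2) := Real.rpow_add hx _ _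
  have hkey : x ^ (s / 2) * (-Real.log x) ≤ 2 / s := by
    have := rpow_mul_neg_log_le (a := s / 2) (by linarith) hx hx1
    calc x ^ (s/2) * (-Real.log x) ≤ 1 / (s/2) := this
    _ = 2 / s := by field_simp
  have hlx : 0 ≤ -Real.log x := by
    simpa using Real.log_nonpos hx.le hx1
  have hxp : (0:ℝ) < x ^ (s/2) := Real.rpow_pos_of_pos hx _
  have habs : |c * x ^ t * Real.log x / (1 + x) ^ n| ≤ |c| * (x ^ t * (-Real.log x)) := by
    rw [abs_div, abs_mul, abs_mul]
    have h1 : |x ^ t| = x ^ t := abs_of_pos (Real.rpow_pos_of_pos hx t)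
    have h2 : |Real.log x| = -Real.log x := abs_of_nonpos (Real.log_nonpos hx.le hx1)
    have h3 : |(1 + x) ^ n| = (1 + x) ^ n := abs_of_pos (by positivity)
    rw [h1, h2, h3]
    rw [div_le_iff₀ (by positivity)]
    have hnum : 0 ≤ |c| * x ^ t * -Real.log x := by positivity
    nlinarith [mul_le_mul_of_nonneg_left h1x hnum]
  refine habs.trans ?_
  have : x ^ t * (-Real.log x) ≤ (2 / s) * x ^ (s/2) := by
    calc x ^ t * (-Real.log x) ≤ x ^ (s/2 + s/2) * (-Real.log x) :=
          mul_le_mul_of_nonneg_right hxt hlx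
    _ = x ^ (s/2) * (x ^ (s/2) * (-Real.log x)) := by rw [hsplit]; ring
    _ ≤ x ^ (s/2) * (2/s) := mul_le_mul_of_nonneg_left hkey hxp.le
    _ = (2/s) * x ^ (s/2) := by ring
  calc |c| * (x ^ t * -Real.log x) ≤ |c| * ((2/s) * x ^ (s/2)) :=
        mul_le_mul_of_nonneg_left this (abs_nonneg c)
  _ = |c| * (2/s) * x ^ (s/2) := by ring

lemma II_Alog {s : ℝ} (hs : 0 < s) :
    IntervalIntegrable (fun x : ℝ => x ^ s * Real.log x / (1 + x)) volume 0 1 := by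
  have hb : IntervalIntegrable (fun x : ℝ => |(1:ℝ)| * (2 / s) * x ^ (s / 2)) volume 0 1 :=
    (intervalIntegral.intervalIntegrable_rpow' (by linarith)).const_mul _
  apply hb.mono_fun
  · have := meas_aux hs.le 1 1 (volume.restrict (Set.uIoc (0:ℝ) 1))
    simpa [pow_one] using this
  · rw [Filter.EventuallyLE, ae_restrict_iff' measurableSet_uIoc]
    filter_upwards with x hx
    rw [Set.uIoc_of_le (zero_le_one)] at hx
    have := log_integrand_bound (c := 1) hs le_rfl hx.1 hx.2 1
    simp only [one_mul, pow_one] at this ⊢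
    rw [Real.norm_eq_abs, Real.norm_eq_abs]
    refine this.trans ?_
    rw [abs_of_nonneg (mul_nonneg (by positivity) (Real.rpow_nonneg hx.1.le _))]

lemma II_Blog {s : ℝ} (hs : 0 < s) :
    IntervalIntegrable (fun x : ℝ => 2 * x ^ s * Real.log x / (1 + x) ^ 2) volume 0 1 := by
  have hb : IntervalIntegrable (fun x : ℝ => |(2:ℝ)| * (2 / s) * x ^ (s / 2)) volume 0 1 :=
    (intervalIntegral.intervalIntegrable_rpow' (by linarith)).const_mul _
  apply hb.mono_fun
  · exact meas_aux hs.le 2 2 _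
  · rw [Filter.EventuallyLE, ae_restrict_iff' measurableSet_uIoc]
    filter_upwards with x hx
    rw [Set.uIoc_of_le (zero_le_one)] at hx
    have := log_integrand_bound (c := 2) hs le_rfl hx.1 hx.2 2
    rw [Real.norm_eq_abs, Real.norm_eq_abs]
    refine this.trans ?_
    rw [abs_of_nonneg (mul_nonneg (by positivity) (Real.rpow_nonneg hx.1.le _))]

lemma II_xi {s : ℝ} (hs : 0 < s) :
    IntervalIntegrable (fun x : ℝ => ((1 - x) / (1 + x)) * (s * x ^ (s - 1))) volume 0 1 := by
  have hb : IntervalIntegrable (fun x : ℝ => s * x ^ (s - 1)) volume 0 1 :=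
    (intervalIntegral.intervalIntegrable_rpow' (by linarith)).const_mul s
  apply hb.mono_fun
  · apply ContinuousOn.aestronglyMeasurable ?_ measurableSet_uIoc
    rw [Set.uIoc_of_le (zero_le_one : (0:ℝ) ≤ 1)]
    intro x hx
    have hx0 : (0:ℝ) < x := hx.1
    have h1x : (1:ℝ) + x ≠ 0 := by linarith
    exact (((continuousAt_const.sub continuousAt_id).div
      (continuousAt_const.add continuousAt_id) h1x).mul
      (continuousAt_const.mul
        (Real.continuousAt_rpow_const x _ (Or.inl hx0.ne')))).continuousWithinAt
  · rw [Filter.EventuallyLE, ae_restrict_iff' measurableSet_uIoc]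
    filter_upwards with x hx
    rw [Set.uIoc_of_le (zero_le_one : (0:ℝ) ≤ 1)] at hx
    have hx0 : (0:ℝ) < x := hx.1
    have hfrac : |(1 - x) / (1 + x)| ≤ 1 := by
      rw [abs_div]
      rw [div_le_one (by rw [abs_of_pos (by linarith)]; linarith)]
      rw [abs_of_nonneg (by linarith [hx.2] : (0:ℝ) ≤ 1 - x), abs_of_pos (by linarith)]
      linarith
    rw [Real.norm_eq_abs, Real.norm_eq_abs, abs_mul]
    have h2 : |s * x ^ (s-1)| = s * x ^ (s-1) := by
      rw [abs_of_nonneg]; positivity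
    rw [h2]
    nlinarith [abs_nonneg ((1-x)/(1+x)), Real.rpow_nonneg hx0.le (s-1),
      mul_le_mul_of_nonneg_right hfrac (by positivity : (0:ℝ) ≤ s * x ^ (s-1))]

lemma ibp_eps {s ε : ℝ} (hs : 0 < s) (hε : 0 < ε) (hε1 : ε ≤ 1) :
    ∫ x in ε..1, ((1 - x) / (1 + x)) * (s * x ^ (s - 1))
      = (∫ x in ε..1, 2 * x ^ s / (1 + x) ^ 2) - (1 - ε) / (1 + ε) * ε ^ s := by
  have huIcc : Set.uIcc ε 1 = Icc ε 1 := uIcc_of_le hε1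
  have hder : ∀ x ∈ Set.uIcc ε 1, HasDerivAt (fun y : ℝ => (1 - y) / (1 + y) * y ^ s)
      (-2 / (1 + x) ^ 2 * x ^ s + (1 - x) / (1 + x) * (s * x ^ (s - 1))) x := by
    intro x hx
    rw [huIcc] at hx
    have hx0 : (0:ℝ) < x := lt_of_lt_of_le hε hx.1
    have h1x : (1:ℝ) + x ≠ 0 := by linarith
    have hu : HasDerivAt (fun y : ℝ => 1 - y) (-1) x := (hasDerivAt_id x).const_sub 1
    have hv : HasDerivAt (fun y : ℝ => 1 + y) 1 x := (hasDerivAt_id x).const_add 1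
    have h1 : HasDerivAt (fun y : ℝ => (1 - y) / (1 + y)) (-2 / (1 + x) ^ 2) x := by
      have := hu.div hv h1x
      refine this.congr_deriv ?_
      ring
    have h2 : HasDerivAt (fun y : ℝ => y ^ s) (s * x ^ (s - 1)) x :=
      Real.hasDerivAt_rpow_const (Or.inl hx0.ne')
    exact h1.mul h2
  have hcont : ContinuousOn (fun x : ℝ =>
      -2 / (1 + x) ^ 2 * x ^ s + (1 - x) / (1 + x) * (s * x ^ (s - 1))) (Set.uIcc ε 1) := by
    rw [huIcc]
    intro x hx
    have hx0 : (0:ℝ) < x := lt_of_lt_of_le hε hx.1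
    have h1x : (1:ℝ) + x ≠ 0 := by linarith
    have h1xp : ((1:ℝ) + x) ^ 2 ≠ 0 := by positivity
    exact (((continuousAt_const.div ((continuousAt_const.add continuousAt_id).pow 2) h1xp).mul
      (Real.continuousAt_rpow_const x _ (Or.inl hx0.ne'))).add
      (((continuousAt_const.sub continuousAt_id).div
        (continuousAt_const.add continuousAt_id) h1x).mul
        (continuousAt_const.mul
          (Real.continuousAt_rpow_const x _ (Or.inl hx0.ne'))))).continuousWithinAt
  have hint := hcont.intervalIntegrable (μ := volume)
  have hftc := intervalIntegral.integral_eq_sub_of_hasDerivAt hder hint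
  have hH1 : (1 - (1:ℝ)) / (1 + 1) * (1:ℝ) ^ s = 0 := by norm_num
  rw [hH1] at hftc
  -- hftc : ∫ deriv = 0 - H ε
  have hBε : IntervalIntegrable (fun x : ℝ => 2 * x ^ s / (1 + x) ^ 2) volume ε 1 :=
    (II_B hs).mono_set' (by
      rw [Set.uIoc_of_le hε1, Set.uIoc_of_le (zero_le_one : (0:ℝ) ≤ 1)]
      exact Ioc_subset_Ioc_left hε.le)
  have hsplit : ∀ x : ℝ, ((1 - x) / (1 + x)) * (s * x ^ (s - 1)) =
      (-2 / (1 + x) ^ 2 * x ^ s + (1 - x) / (1 + x) * (s * x ^ (s - 1)))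
        + 2 * x ^ s / (1 + x) ^ 2 := by
    intro x; ring
  calc ∫ x in ε..1, ((1 - x) / (1 + x)) * (s * x ^ (s - 1))
      = ∫ x in ε..1, ((-2 / (1 + x) ^ 2 * x ^ s + (1 - x) / (1 + x) * (s * x ^ (s - 1)))
        + 2 * x ^ s / (1 + x) ^ 2) := by
        apply intervalIntegral.integral_congr; intro x _; exact hsplit x
    _ = (∫ x in ε..1, (-2 / (1 + x) ^ 2 * x ^ s + (1 - x) / (1 + x) * (s * x ^ (s - 1))))
        + ∫ x in ε..1, 2 * x ^ s / (1 + x) ^ 2 := intervalIntegral.integral_add hint hBε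
    _ = (∫ x in ε..1, 2 * x ^ s / (1 + x) ^ 2) - (1 - ε) / (1 + ε) * ε ^ s := by
        rw [hftc]; ring

lemma tendsto_int (f : ℝ → ℝ) (hf : IntervalIntegrable f volume 0 1) :
    Filter.Tendsto (fun n : ℕ => ∫ x in (1/((n:ℝ)+2))..1, f x) Filter.atTop
      (nhds (∫ x in (0:ℝ)..1, f x)) := by
  have hle : ∀ n : ℕ, 1/((n:ℝ)+2) ≤ 1 := by
    intro n; rw [div_le_one (by positivity)]; linarith [Nat.cast_nonneg (α := ℝ) n]
  have hpos : ∀ n : ℕ, (0:ℝ) < 1/((n:ℝ)+2) := by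
    intro n; positivity
  have hU : (⋃ n : ℕ, Ioc (1/((n:ℝ)+2)) 1) = Ioc (0:ℝ) 1 := by
    ext x
    simp only [mem_iUnion, mem_Ioc]
    constructor
    · rintro ⟨n, h1, h2⟩; exact ⟨lt_trans (hpos n) h1, h2⟩
    · rintro ⟨h1, h2⟩
      obtain ⟨n, hn⟩ := exists_nat_gt (1/x)
      refine ⟨n, ?_, h2⟩
      have h3 : 1/x < (n:ℝ) + 2 := by linarith
      have h4 : 1 < ((n:ℝ) + 2) * x := (div_lt_iff₀ h1).mp h3
      exact (div_lt_iff₀ (by positivity)).mpr (by linarith)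
  have hmono : Monotone (fun n : ℕ => Ioc (1/((n:ℝ)+2)) 1) := by
    intro m n hmn
    apply Ioc_subset_Ioc_left
    apply one_div_le_one_div_of_le (by positivity)
    have : (m:ℝ) ≤ (n:ℝ) := Nat.cast_le.mpr hmn
    linarith
  have h := tendsto_setIntegral_of_monotone (μ := volume) (f := f)
    (fun n : ℕ => measurableSet_Ioc) hmono (by rw [hU]; exact hf.1)
  rw [hU] at h
  rw [show (∫ x in (0:ℝ)..1, f x) = ∫ x in Ioc (0:ℝ) 1, f x from
    intervalIntegral.integral_of_le zero_le_one]
  exact h.congr fun n => (intervalIntegral.integral_of_le (hle n)).symm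

lemma xi0_eq_B {s : ℝ} (hs : 0 < s) : ξ₀ s = B s := by
  have t1 := tendsto_int _ (II_xi hs)
  have t2 := tendsto_int _ (II_B hs)
  have hu : Filter.Tendsto (fun n : ℕ => 1/((n:ℝ)+2)) Filter.atTop (nhds 0) := by
    simp only [one_div]
    exact Filter.Tendsto.inv_tendsto_atTop
      (Filter.tendsto_atTop_add_const_right _ 2 tendsto_natCast_atTop_atTop)
  have hφ : ContinuousAt (fun ε : ℝ => (1 - ε) / (1 + ε) * ε ^ s) 0 := by
    apply ContinuousAt.mul
    · apply ContinuousAt.div (continuousAt_const.sub continuousAt_id)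
        (continuousAt_const.add continuousAt_id)
      norm_num
    · exact Real.continuousAt_rpow_const 0 s (Or.inr hs.le)
  have t3 : Filter.Tendsto (fun n : ℕ => (1 - 1/((n:ℝ)+2)) / (1 + 1/((n:ℝ)+2)) *
      (1/((n:ℝ)+2)) ^ s) Filter.atTop (nhds 0) := by
    have := hφ.tendsto.comp hu
    simpa [Function.comp_def, Real.zero_rpow hs.ne'] using this
  have key : ∀ n : ℕ, ∫ x in (1/((n:ℝ)+2))..1, ((1 - x) / (1 + x)) * (s * x ^ (s - 1))
      = (∫ x in (1/((n:ℝ)+2))..1, 2 * x ^ s / (1 + x) ^ 2)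
        - (1 - 1/((n:ℝ)+2)) / (1 + 1/((n:ℝ)+2)) * (1/((n:ℝ)+2)) ^ s := by
    intro n
    exact ibp_eps hs (by positivity) (by rw [div_le_one (by positivity)]; linarith [Nat.cast_nonneg (α := ℝ) n])
  have t4 := (t2.sub t3).congr fun n => (key n).symm
  have := tendsto_nhds_unique t1 t4
  simpa [ξ₀, B] using this

lemma one_sub_xi0 {s : ℝ} (hs : 0 < s) : 1 - ξ₀ s = 2 * s * A s := by
  have hpow : (∫ x in (0:ℝ)..1, s * x ^ (s-1)) = 1 := by
    rw [intervalIntegral.integral_const_mul, integral_rpow (Or.inl (by linarith))]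
    rw [sub_add_cancel, Real.one_rpow, Real.zero_rpow hs.ne']
    field_simp
    norm_num
  have hII : IntervalIntegrable (fun x : ℝ => s * x ^ (s-1)) volume 0 1 :=
    (intervalIntegral.intervalIntegrable_rpow' (by linarith)).const_mul s
  have hsub : (∫ x in (0:ℝ)..1, s * x ^ (s-1)) - ξ₀ s = ∫ x in (0:ℝ)..1,
      (s * x ^ (s-1) - ((1 - x) / (1 + x)) * (s * x ^ (s - 1))) :=
    (intervalIntegral.integral_sub hII (II_xi hs)).symm
  rw [hpow] at hsub
  rw [hsub]
  have hcongr : ∀ x ∈ Set.uIoc (0:ℝ) 1,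
      s * x ^ (s-1) - ((1 - x) / (1 + x)) * (s * x ^ (s - 1)) = 2 * s * (x ^ s / (1 + x)) := by
    intro x hx
    rw [Set.uIoc_of_le (zero_le_one : (0:ℝ) ≤ 1)] at hx
    have hx0 : (0:ℝ) < x := hx.1
    have h1x : (1:ℝ) + x ≠ 0 := by linarith
    have hxs : x ^ s = x ^ (s-1) * x := by
      have h := Real.rpow_add_one hx0.ne' (s-1)
      rw [sub_add_cancel] at h
      exact h
    rw [hxs]
    field_simp
    ring
  rw [intervalIntegral.integral_congr_ae (Filter.Eventually.of_forall hcongr)]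
  rw [intervalIntegral.integral_const_mul]
  rfl


section P3
open intervalIntegral Filter Metric

variable {s : ℝ}

lemma hasDerivAt_A (hs : 0 < s) : HasDerivAt A (A' s) s := by
  have hε : 0 < s / 2 := by linarith
  have h := intervalIntegral.hasDerivAt_integral_of_dominated_loc_of_deriv_le
    (F := fun t x => x ^ t / (1 + x)) (F' := fun t x => x ^ t * Real.log x / (1 + x))
    (x₀ := s) (a := (0:ℝ)) (b := (1:ℝ)) (μ := volume) (s := Metric.ball s (s / 2))
    (bound := fun x => |(1:ℝ)| * (2 / (s/2)) * x ^ ((s/2) / 2)) (Metric.ball_mem_nhds s hε)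
    ?_ (II_A hs) ?_ ?_ ?_ ?_
  · exact h.2
  · apply Filter.Eventually.of_forall
    intro t
    apply ContinuousOn.aestronglyMeasurable ?_ measurableSet_uIoc
    rw [Set.uIoc_of_le (zero_le_one : (0:ℝ) ≤ 1)]
    intro x hx
    have hx0 : (0:ℝ) < x := hx.1
    exact ((Real.continuousAt_rpow_const x t (Or.inl hx0.ne')).div
      (continuousAt_const.add continuousAt_id) (by simp only [Pi.add_apply, id_eq]; exact ne_of_gt (by linarith))).continuousWithinAt
  · have := meas_aux (le_of_lt hs) 1 1 (volume.restrict (Set.uIoc (0:ℝ) 1))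
    simpa [pow_one] using this
  · apply Filter.Eventually.of_forall
    intro x hx t ht
    rw [Set.uIoc_of_le (zero_le_one : (0:ℝ) ≤ 1)] at hx
    rw [Metric.mem_ball, Real.dist_eq] at ht
    have hts : s / 2 ≤ t := by
      have := abs_lt.mp ht; linarith [this.1]
    have := log_integrand_bound (c := 1) hε hts hx.1 hx.2 1
    simp only [one_mul, pow_one] at this
    rw [Real.norm_eq_abs]
    exact this
  · exact (intervalIntegral.intervalIntegrable_rpow' (by linarith)).const_mul _
  · apply Filter.Eventually.of_forall
    intro x hx t _
    rw [Set.uIoc_of_le (zero_le_one : (0:ℝ) ≤ 1)] at hx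
    exact (Real.hasStrictDerivAt_const_rpow hx.1 t).hasDerivAt.div_const (1 + x)

lemma hasDerivAt_B (hs : 0 < s) : HasDerivAt B (ξ₀' s) s := by
  have hε : 0 < s / 2 := by linarith
  have h := intervalIntegral.hasDerivAt_integral_of_dominated_loc_of_deriv_le
    (F := fun t x => 2 * x ^ t / (1 + x) ^ 2)
    (F' := fun t x => 2 * x ^ t * Real.log x / (1 + x) ^ 2)
    (x₀ := s) (a := (0:ℝ)) (b := (1:ℝ)) (μ := volume) (s := Metric.ball s (s / 2))
    (bound := fun x => |(2:ℝ)| * (2 / (s/2)) * x ^ ((s/2) / 2)) (Metric.ball_mem_nhds s hε)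
    ?_ (II_B hs) ?_ ?_ ?_ ?_
  · exact h.2
  · apply Filter.Eventually.of_forall
    intro t
    apply ContinuousOn.aestronglyMeasurable ?_ measurableSet_uIoc
    rw [Set.uIoc_of_le (zero_le_one : (0:ℝ) ≤ 1)]
    intro x hx
    have hx0 : (0:ℝ) < x := hx.1
    have h2 : ((1:ℝ) + x) ^ 2 ≠ 0 := by positivity
    exact ((continuousAt_const.mul (Real.continuousAt_rpow_const x t (Or.inl hx0.ne'))).div
      ((continuousAt_const.add continuousAt_id).pow 2) h2).continuousWithinAt
  · exact meas_aux (le_of_lt hs) 2 2 _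
  · apply Filter.Eventually.of_forall
    intro x hx t ht
    rw [Set.uIoc_of_le (zero_le_one : (0:ℝ) ≤ 1)] at hx
    rw [Metric.mem_ball, Real.dist_eq] at ht
    have hts : s / 2 ≤ t := by
      have := abs_lt.mp ht; linarith [this.1]
    have := log_integrand_bound (c := 2) hε hts hx.1 hx.2 2
    rw [Real.norm_eq_abs]
    exact this
  · exact (intervalIntegral.intervalIntegrable_rpow' (by linarith)).const_mul _
  · apply Filter.Eventually.of_forall
    intro x hx t _
    rw [Set.uIoc_of_le (zero_le_one : (0:ℝ) ≤ 1)] at hx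
    have := ((Real.hasStrictDerivAt_const_rpow hx.1 t).hasDerivAt.const_mul 2).div_const
      ((1 + x) ^ 2)
    refine this.congr_deriv ?_
    ring

lemma A_pos (hs : 0 < s) : 0 < A s := by
  apply intervalIntegral_pos_of_pos_on (II_A hs) _ zero_lt_one
  intro x hx
  have hx0 : (0:ℝ) < x := hx.1
  have : (0:ℝ) < 1 + x := by linarith
  positivity

lemma B_pos (hs : 0 < s) : 0 < B s := by
  apply intervalIntegral_pos_of_pos_on (II_B hs) _ zero_lt_one
  intro x hx
  have hx0 : (0:ℝ) < x := hx.1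
  have : (0:ℝ) < 1 + x := by positivity
  positivity

end P3

section P4

variable {s : ℝ}

lemma Qform_nonneg {s x y : ℝ} (hx0 : 0 < x) (hy0 : 0 < y) :
    0 ≤ 2 * x ^ s * y ^ s * ((Real.log x - Real.log y) * (x - y)) /
      ((1 + x) ^ 2 * (1 + y) ^ 2) := by
  have hnum : 0 ≤ (Real.log x - Real.log y) * (x - y) := by
    rcases le_total x y with h | h
    · have := Real.log_le_log hx0 h
      nlinarith
    · have := Real.log_le_log hy0 h
      nlinarith
  positivity

lemma Qform_lower {s : ℝ} (hs : 0 < s) {x y : ℝ} (hx1 : 1/8 < x) (hx2 : x < 1/4)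
    (hy1 : 1/2 < y) (hy2 : y < 3/4) :
    2 * (1/8 : ℝ) ^ s * (1/2 : ℝ) ^ s * (Real.log 2 * (1/4)) / 16 ≤
      2 * x ^ s * y ^ s * ((Real.log x - Real.log y) * (x - y)) /
        ((1 + x) ^ 2 * (1 + y) ^ 2) := by
  have hlog2 : 0 < Real.log 2 := Real.log_pos (by norm_num)
  have hx0 : (0:ℝ) < x := by linarith
  have hy0 : (0:ℝ) < y := by linarith
  have hxs : (1/8 : ℝ) ^ s ≤ x ^ s := Real.rpow_le_rpow (by norm_num) hx1.le hs.le
  have hys : (1/2 : ℝ) ^ s ≤ y ^ s := Real.rpow_le_rpow (by norm_num) hy1.le hs.le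
  have hlx : Real.log x - Real.log y ≤ -Real.log 2 := by
    have h1 : Real.log x ≤ Real.log (1/4) := Real.log_le_log hx0 (by linarith)
    have h2 : Real.log (1/2) ≤ Real.log y := Real.log_le_log (by norm_num) (by linarith)
    have e1 : Real.log (1/4 : ℝ) = -(2 * Real.log 2) := by
      rw [show (1/4 : ℝ) = (2:ℝ)^(-2 : ℤ) by norm_num, Real.log_zpow]
      push_cast; ring
    have e2 : Real.log (1/2 : ℝ) = -Real.log 2 := by
      rw [one_div, Real.log_inv]
    linarith
  have hxy : x - y ≤ -(1/4 : ℝ) := by linarith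
  have hprod : Real.log 2 * (1/4) ≤ (Real.log x - Real.log y) * (x - y) := by
    nlinarith
  have h8 : (0:ℝ) < (1/8 : ℝ) ^ s := Real.rpow_pos_of_pos (by norm_num) s
  have h2 : (0:ℝ) < (1/2 : ℝ) ^ s := Real.rpow_pos_of_pos (by norm_num) s
  have hx8 : (0:ℝ) < x ^ s := Real.rpow_pos_of_pos hx0 s
  have hy2' : (0:ℝ) < y ^ s := Real.rpow_pos_of_pos hy0 s
  have hab : 2 * (1/8:ℝ)^s * (1/2:ℝ)^s ≤ 2 * x^s * y^s := by
    have := mul_le_mul hxs hys h2.le hx8.le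
    linarith
  have hnum := mul_le_mul hab hprod (by positivity) (by positivity)
  have hden : (0:ℝ) < (1 + x) ^ 2 * (1 + y) ^ 2 := by positivity
  have hden16 : (1 + x) ^ 2 * (1 + y) ^ 2 ≤ 16 := by
    have e1 : (1+x)^2 ≤ ((5:ℝ)/4)^2 := by nlinarith
    have e2 : (1+y)^2 ≤ ((7:ℝ)/4)^2 := by nlinarith
    have := mul_le_mul e1 e2 (sq_nonneg (1+y)) (by positivity)
    nlinarith
  exact div_le_div₀ (le_trans (by positivity) hnum) hnum hden hden16

lemma key_pos (hs : 0 < s) : 0 < A' s * B s - A s * ξ₀' s := by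
  set μ : Measure ℝ := volume.restrict (Ioo 0 1) with hμ
  set f₁ : ℝ → ℝ := fun x => x ^ s * Real.log x / (1 + x) with hf₁
  set g₁ : ℝ → ℝ := fun y => 2 * y ^ s / (1 + y) ^ 2 with hg₁
  set f₂ : ℝ → ℝ := fun x => x ^ s / (1 + x) with hf₂
  set g₂ : ℝ → ℝ := fun y => 2 * y ^ s * Real.log y / (1 + y) ^ 2 with hg₂
  -- integrability on Ioo
  have hif₁ : Integrable f₁ μ := (II_Alog hs).1.mono_set Ioo_subset_Ioc_self
  have hig₁ : Integrable g₁ μ := (II_B hs).1.mono_set Ioo_subset_Ioc_self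
  have hif₂ : Integrable f₂ μ := (II_A hs).1.mono_set Ioo_subset_Ioc_self
  have hig₂ : Integrable g₂ μ := (II_Blog hs).1.mono_set Ioo_subset_Ioc_self
  -- values
  have hA' : A' s = ∫ x, f₁ x ∂μ := by
    rw [A', intervalIntegral.integral_of_le (zero_le_one : (0:ℝ) ≤ 1),
      integral_Ioc_eq_integral_Ioo]
  have hA : A s = ∫ x, f₂ x ∂μ := by
    rw [A, intervalIntegral.integral_of_le (zero_le_one : (0:ℝ) ≤ 1),
      integral_Ioc_eq_integral_Ioo]
  have hB : B s = ∫ x, g₁ x ∂μ := by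
    rw [B, intervalIntegral.integral_of_le (zero_le_one : (0:ℝ) ≤ 1),
      integral_Ioc_eq_integral_Ioo]
  have hB' : ξ₀' s = ∫ x, g₂ x ∂μ := by
    rw [ξ₀', intervalIntegral.integral_of_le (zero_le_one : (0:ℝ) ≤ 1),
      integral_Ioc_eq_integral_Ioo]
  set P : ℝ × ℝ → ℝ := fun z => f₁ z.1 * g₁ z.2 - f₂ z.1 * g₂ z.2 with hP
  set Q : ℝ × ℝ → ℝ := fun z => P z + P z.swap with hQ
  have hPint : Integrable P (μ.prod μ) :=
    (hif₁.mul_prod hig₁).sub (hif₂.mul_prod hig₂)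
  have hPswapint : Integrable (fun z => P z.swap) (μ.prod μ) := by
    have h := ((hig₁.mul_prod hif₁).sub (hig₂.mul_prod hif₂))
    apply h.congr
    filter_upwards with z
    simp only [hP, Pi.sub_apply, Prod.fst_swap, Prod.snd_swap]
    ring
  have hQint : Integrable Q (μ.prod μ) := hPint.add hPswapint
  have hPval : ∫ z, P z ∂(μ.prod μ) = A' s * B s - A s * ξ₀' s := by
    rw [hP, integral_sub (hif₁.mul_prod hig₁) (hif₂.mul_prod hig₂),
      integral_prod_mul, integral_prod_mul, hA', hA, hB, hB']
  have hPswapval : ∫ z, P z.swap ∂(μ.prod μ) = A' s * B s - A s * ξ₀' s := by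
    rw [MeasureTheory.integral_prod_swap (μ := μ) (ν := μ) P, hPval]
  have hQval : ∫ z, Q z ∂(μ.prod μ) = 2 * (A' s * B s - A s * ξ₀' s) := by
    rw [hQ]
    rw [integral_add hPint hPswapint, hPval, hPswapval]
    ring
  -- pointwise formula for Q
  have hQeq : ∀ x y : ℝ, 0 < x → 0 < y → Q (x, y) =
      2 * x ^ s * y ^ s * ((Real.log x - Real.log y) * (x - y)) / ((1 + x) ^ 2 * (1 + y) ^ 2) := by
    intro x y hx hy
    have h1x : (1:ℝ) + x ≠ 0 := by linarith
    have h1y : (1:ℝ) + y ≠ 0 := by linarith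
    simp only [hQ, hP, hf₁, hf₂, hg₁, hg₂, Prod.fst_swap, Prod.snd_swap]
    field_simp
    ring
  -- nonnegativity
  have hQ0 : ∀ z : ℝ × ℝ, z.1 ∈ Ioo (0:ℝ) 1 → z.2 ∈ Ioo (0:ℝ) 1 → 0 ≤ Q z := by
    rintro ⟨x, y⟩ hx hy
    rw [hQeq x y hx.1 hy.1]
    exact Qform_nonneg hx.1 hy.1
  have haemem : ∀ᵐ z ∂(μ.prod μ), z ∈ Ioo (0:ℝ) 1 ×ˢ Ioo (0:ℝ) 1 := by
    rw [hμ, Measure.prod_restrict]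
    exact ae_restrict_mem (measurableSet_Ioo.prod measurableSet_Ioo)
  have hQ0ae : 0 ≤ᵐ[μ.prod μ] Q := by
    filter_upwards [haemem] with z hz
    exact hQ0 z hz.1 hz.2
  -- rectangle lower bound
  set R : Set (ℝ × ℝ) := Ioo (1/8 : ℝ) (1/4) ×ˢ Ioo (1/2 : ℝ) (3/4) with hR
  set c : ℝ := 2 * (1/8 : ℝ) ^ s * (1/2 : ℝ) ^ s * (Real.log 2 * (1/4)) / 16 with hc
  have hlog2 : 0 < Real.log 2 := Real.log_pos (by norm_num)
  have hcpos : 0 < c := by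
    rw [hc]
    have h8 : (0:ℝ) < (1/8 : ℝ) ^ s := Real.rpow_pos_of_pos (by norm_num) s
    have h2 : (0:ℝ) < (1/2 : ℝ) ^ s := Real.rpow_pos_of_pos (by norm_num) s
    positivity
  have hcR : ∀ z ∈ R, c ≤ Q z := by
    rintro ⟨x, y⟩ hz
    obtain ⟨hx, hy⟩ := hz
    simp only [mem_Ioo] at hx hy
    have hx0 : (0:ℝ) < x := by linarith [hx.1]
    have hy0 : (0:ℝ) < y := by linarith [hy.1]
    rw [hQeq x y hx0 hy0, hc]
    exact Qform_lower hs hx.1 hx.2 hy.1 hy.2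
  have hRmeas : MeasurableSet R := measurableSet_Ioo.prod measurableSet_Ioo
  have hm : (μ.prod μ) R = ENNReal.ofReal (1/8 : ℝ) * ENNReal.ofReal (1/4 : ℝ) := by
    rw [hR, Measure.prod_prod, hμ]
    rw [Measure.restrict_apply measurableSet_Ioo, Measure.restrict_apply measurableSet_Ioo]
    rw [inter_eq_self_of_subset_left (Ioo_subset_Ioo (by norm_num) (by norm_num)),
      inter_eq_self_of_subset_left (Ioo_subset_Ioo (by norm_num) (by norm_num))]
    rw [Real.volume_Ioo, Real.volume_Ioo]
    norm_num
  have hmne : (μ.prod μ) R ≠ ⊤ := by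
    rw [hm]; exact ENNReal.mul_ne_top ENNReal.ofReal_ne_top ENNReal.ofReal_ne_top
  have hlb := setIntegral_ge_of_const_le_real hRmeas hmne hcR hQint.integrableOn
  have hub := setIntegral_le_integral hQint hQ0ae (s := R)
  have hmval : ((μ.prod μ) R).toReal = 1/32 := by
    rw [hm, ENNReal.toReal_mul, ENNReal.toReal_ofReal (by norm_num),
      ENNReal.toReal_ofReal (by norm_num)]
    norm_num
  rw [measureReal_def, hmval] at hlb
  have : 0 < (2:ℝ) * (A' s * B s - A s * ξ₀' s) := by
    rw [← hQval]
    calc (0:ℝ) < c * (1/32) := by positivity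
    _ ≤ ∫ z in R, Q z ∂(μ.prod μ) := hlb
    _ ≤ ∫ z, Q z ∂(μ.prod μ) := hub
  linarith

end P4

section P5

variable {s : ℝ}

lemma deriv_relation (hs : 0 < s) : 2 * A s + 2 * s * A' s = -ξ₀' s := by
  have h1 : HasDerivAt (fun t => 2 * t * A t) (2 * A s + 2 * s * A' s) s := by
    have := ((hasDerivAt_id s).const_mul 2).mul (hasDerivAt_A hs)
    refine this.congr_deriv ?_
    simp only [id_eq]; ring
  have h2 : HasDerivAt (fun t => 1 - B t) (-ξ₀' s) s := (hasDerivAt_B hs).const_sub 1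
  have heq : (fun t => 2 * t * A t) =ᶠ[nhds s] (fun t => 1 - B t) := by
    filter_upwards [lt_mem_nhds hs] with t ht
    rw [← xi0_eq_B ht]
    exact (one_sub_xi0 ht).symm
  exact h1.unique (h2.congr_of_eventuallyEq heq)

lemma g_neg (hs : 0 < s) : (1 - ξ₀ s) * ξ₀ s + s * ξ₀' s < 0 := by
  have hxi := xi0_eq_B hs
  have h2sA := one_sub_xi0 hs
  have hrel := deriv_relation hs
  have hk := key_pos hs
  have hBval : B s = 1 - 2 * s * A s := by rw [← hxi]; linarith
  have e1 : ξ₀' s = -2 * A s - 2 * s * A' s := by linarith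
  have e2 : A' s * B s - A s * ξ₀' s = A' s + 2 * A s ^ 2 := by
    rw [hBval, e1]; ring
  have e3 : (1 - ξ₀ s) * ξ₀ s + s * ξ₀' s = -2 * s ^ 2 * (A' s + 2 * A s ^ 2) := by
    rw [h2sA, hxi, hBval, e1]; ring
  rw [e3]
  rw [e2] at hk
  have hs2 : 0 < s ^ 2 := by positivity
  nlinarith

lemma xi3_deriv (hs : 0 < s) : ∃ d, HasDerivAt ξ₃ d s ∧ 0 < d := by
  have hB := hasDerivAt_B hs
  have hBpos := B_pos hs
  have hvpos : 0 < 2 * s * B s := by positivity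
  have hnum : HasDerivAt (fun t => 1 - B t) (-ξ₀' s) s := hB.const_sub 1
  have hden : HasDerivAt (fun t => 2 * t * B t) (2 * B s + 2 * s * ξ₀' s) s := by
    have := ((hasDerivAt_id s).const_mul 2).mul hB
    refine this.congr_deriv ?_
    simp only [id_eq]; ring
  have hφ := hnum.div hden hvpos.ne'
  have heq : ξ₃ =ᶠ[nhds s] (fun t => (1 - B t) / (2 * t * B t)) := by
    filter_upwards [lt_mem_nhds hs] with t ht
    rw [ξ₃, xi0_eq_B ht]
  refine ⟨_, hφ.congr_of_eventuallyEq heq, ?_⟩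
  have hg := g_neg hs
  rw [xi0_eq_B hs] at hg
  apply div_pos ?_ (by positivity)
  nlinarith

end P5

end Xi3Aux

theorem g_neg_and_xi3_strictMono :
    (∀ s : ℝ, 0 < s → (1 - ξ₀ s) * ξ₀ s + s * ξ₀' s < 0) ∧
    StrictMonoOn ξ₃ (Set.Ioi 0) := by
  constructor
  · exact fun s hs => Xi3Aux.g_neg hs
  · apply strictMonoOn_of_deriv_pos (convex_Ioi 0)
    · intro x hx
      obtain ⟨d, hd, _⟩ := Xi3Aux.xi3_deriv hx
      exact hd.differentiableAt.continuousAt.continuousWithinAt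
    · intro x hx
      rw [interior_Ioi] at hx
      obtain ⟨d, hd, hdpos⟩ := Xi3Aux.xi3_deriv hx
      rw [hd.deriv]
      exact hdpos
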